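/- arXiv:1812.11454 — 6 statements merged into one kernel-verified Lean document; each statement's English description precedes it below -/
import Mathlib

section
/- With weight ω(μ) = ε/(1+αμ)^4 on [-1,1], ε = 3(1-α²)³/(2(3+α²)), and α = -3u/(2+√(4-3u²)) where u = E_1/E_0 ∈ (-1,1), the first moment of the weight satisfies ∫_{-1}^1 μ ω(μ) dμ = E_1/E_0. -/
open MeasureTheory intervalIntegral

private lemma moment_integral (a : ℝ) (ha : |a| < 1) :
    (∫ μ in (-1 : ℝ)..1, μ / (1 + a * μ) ^ 4) = -8 * a / (3 * (1 - a ^ 2) ^ 3) := by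
  have hpos : ∀ x ∈ Set.uIcc (-1 : ℝ) 1, 0 < 1 + a * x := by
    intro x hx
    rw [Set.uIcc_of_le (by norm_num)] at hx
    have hx1 : |x| ≤ 1 := abs_le.2 ⟨hx.1, hx.2⟩
    have : |a * x| < 1 := by
      rw [abs_mul]
      calc |a| * |x| ≤ |a| * 1 := by nlinarith [abs_nonneg a]
        _ < 1 := by simpa using ha
    have := abs_lt.1 this
    linarith [this.1]
  rcases eq_or_ne a 0 with rfl | ha0
  · simp
  · set F : ℝ → ℝ := fun x => (-1 - 3 * a * x) / (6 * a ^ 2 * (1 + a * x) ^ 3) with hF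
    have hderiv : ∀ x ∈ Set.uIcc (-1 : ℝ) 1,
        HasDerivAt F (x / (1 + a * x) ^ 4) x := by
      intro x hx
      have hx0 : (0:ℝ) < 1 + a * x := hpos x hx
      have hden : 6 * a ^ 2 * (1 + a * x) ^ 3 ≠ 0 := by positivity
      have h1 : HasDerivAt (fun y : ℝ => -1 - 3 * a * y) (-(3 * a)) x := by
        simpa using (hasDerivAt_const x (-1 : ℝ)).fun_sub ((hasDerivAt_id x).const_mul (3 * a))
      have h2i : HasDerivAt (fun y : ℝ => 1 + a * y) a x := by
        simpa using ((hasDerivAt_id x).const_mul a).const_add 1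
      have h2 := (h2i.pow 3).const_mul (6 * a ^ 2)
      have := h1.div h2 hden
      convert this using 1
      · rfl
      · rfl
      · rfl
      simp only [Pi.pow_apply]
      push_cast
      field_simp
      ring
    have hint : IntervalIntegrable (fun x : ℝ => x / (1 + a * x) ^ 4)
        volume (-1 : ℝ) 1 := by
      apply ContinuousOn.intervalIntegrable
      apply ContinuousOn.div continuousOn_id
      · exact ((continuous_const.add (continuous_const.mul continuous_id)).pow 4).continuousOn
      · intro x hx
        have := hpos x hx
        positivity
    rw [intervalIntegral.integral_eq_sub_of_hasDerivAt hderiv hint]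
    have h1 : (1 : ℝ) + a ≠ 0 := by
      have := abs_lt.1 ha; intro h; linarith [this.1]
    have h2 : (1 : ℝ) - a ≠ 0 := by
      have := abs_lt.1 ha; intro h; linarith [this.2]
    have h3 : (1 : ℝ) - a ^ 2 ≠ 0 := by
      have := mul_ne_zero h2 h1
      intro h; apply this; linear_combination h
    have e1 : 1 + a * 1 = 1 + a := by ring
    have e2 : 1 + a * (-1) = 1 - a := by ring
    have dA : 6 * a ^ 2 * (1 + a) ^ 3 ≠ 0 :=
      mul_ne_zero (by positivity) (pow_ne_zero _ h1)
    have dB : 6 * a ^ 2 * (1 - a) ^ 3 ≠ 0 :=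
      mul_ne_zero (by positivity) (pow_ne_zero _ h2)
    have dC : 3 * (1 - a ^ 2) ^ 3 ≠ 0 :=
      mul_ne_zero (by norm_num) (pow_ne_zero _ h3)
    simp only [hF]
    rw [e1, e2, div_sub_div _ _ dA dB, div_eq_div_iff (mul_ne_zero dA dB) dC]
    ring

private lemma weight_first_moment_aux (u : ℝ) (hu : |u| < 1) :
    (let α := -(3 * u) / (2 + Real.sqrt (4 - 3 * u ^ 2))
     let ε := 3 * (1 - α ^ 2) ^ 3 / (2 * (3 + α ^ 2))
     ∫ μ in (-1 : ℝ)..1, μ * (ε / (1 + α * μ) ^ 4)) = u := by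
  have hu2 : u ^ 2 < 1 := by
    have := abs_lt.1 hu; nlinarith [this.1, this.2]
  have h4 : (0:ℝ) ≤ 4 - 3 * u ^ 2 := by nlinarith
  have hs0 : 0 ≤ Real.sqrt (4 - 3 * u ^ 2) := Real.sqrt_nonneg _
  have hs2' : Real.sqrt (4 - 3 * u ^ 2) ^ 2 = 4 - 3 * u ^ 2 := Real.sq_sqrt h4
  obtain ⟨s, hs⟩ : ∃ s, Real.sqrt (4 - 3 * u ^ 2) = s := ⟨_, rfl⟩
  rw [hs] at hs0 hs2'
  show (∫ μ in (-1 : ℝ)..1, μ *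
      ((3 * (1 - (-(3 * u) / (2 + Real.sqrt (4 - 3 * u ^ 2))) ^ 2) ^ 3 /
        (2 * (3 + (-(3 * u) / (2 + Real.sqrt (4 - 3 * u ^ 2))) ^ 2))) /
        (1 + (-(3 * u) / (2 + Real.sqrt (4 - 3 * u ^ 2))) * μ) ^ 4)) = u
  rw [hs]
  have h2s : (0:ℝ) < 2 + s := by linarith
  obtain ⟨α, hadef⟩ : ∃ α, -(3 * u) / (2 + s) = α := ⟨_, rfl⟩
  rw [hadef]
  have hα2 : α ^ 2 < 1 := by
    rw [← hadef, div_pow, div_lt_one (by positivity)]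
    nlinarith [sq_nonneg (s + 3 * u), sq_nonneg (s - 3 * u), sq_nonneg (1 - u), sq_nonneg (1 + u)]
  have hα : |α| < 1 := by
    rw [abs_lt]; constructor <;> nlinarith [hα2]
  have hrw : ∀ μ : ℝ, μ * ((3 * (1 - α ^ 2) ^ 3 / (2 * (3 + α ^ 2))) / (1 + α * μ) ^ 4)
      = (3 * (1 - α ^ 2) ^ 3 / (2 * (3 + α ^ 2))) * (μ / (1 + α * μ) ^ 4) := by
    intro μ; ring
  simp_rw [hrw]
  rw [intervalIntegral.integral_const_mul, moment_integral α hα]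
  have h1a : (1:ℝ) - α ^ 2 ≠ 0 := by nlinarith
  have h3a : (0:ℝ) < 3 + α ^ 2 := by positivity
  have step : (3 * (1 - α ^ 2) ^ 3 / (2 * (3 + α ^ 2))) * (-8 * α / (3 * (1 - α ^ 2) ^ 3))
      = -4 * α / (3 + α ^ 2) := by
    field_simp
    ring
  rw [step, ← hadef]
  rw [div_eq_iff (by positivity : (3:ℝ) + (-(3 * u) / (2 + s)) ^ 2 ≠ 0)]
  field_simp
  linear_combination (-u) * hs2'

/-- The M₁ weight `ω(μ) = ε/(1+αμ)^4`, with `α = -3u/(2+√(4-3u²))` and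
`ε = 3(1-α²)³/(2(3+α²))`, reproduces the first normalized moment:
`∫_{-1}^1 μ ω(μ) dμ = u = E₁/E₀`. -/
theorem weight_first_moment (E0 E1 : ℝ) (hE0 : 0 < E0) (hu : |E1 / E0| < 1) :
    (let u := E1 / E0
     let α := -(3 * u) / (2 + Real.sqrt (4 - 3 * u ^ 2))
     let ε := 3 * (1 - α ^ 2) ^ 3 / (2 * (3 + α ^ 2))
     ∫ μ in (-1 : ℝ)..1, μ * (ε / (1 + α * μ) ^ 4)) = E1 / E0 := by
  exact weight_first_moment_aux (E1 / E0) hu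
end

section
/- For the M₁ model, if E_0 > 0 and |E_1/E_0| < 1, then the closed second moment E_2 = E_0 (3 + 4(E_1/E_0)²)/(5 + 2√(4 - 3(E_1/E_0)²)) satisfies E_1² < E_0 E_2 and E_2 < E_0, i.e., the M₁ closure is realizable. -/
/-- Realizability of the M₁ closure: for `E₀ > 0` and `|E₁/E₀| < 1`, the closed
moment `E₂ = E₀(3+4u²)/(5+2√(4-3u²))` with `u = E₁/E₀` satisfies
`E₁² < E₀E₂` and `E₂ < E₀`. -/
theorem M1_closure_realizable (E0 E1 : ℝ) (hE0 : 0 < E0) (hu : |E1 / E0| < 1) :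
    (E1) ^ 2 < E0 * (E0 * (3 + 4 * (E1 / E0) ^ 2) / (5 + 2 * Real.sqrt (4 - 3 * (E1 / E0) ^ 2))) ∧
    E0 * (3 + 4 * (E1 / E0) ^ 2) / (5 + 2 * Real.sqrt (4 - 3 * (E1 / E0) ^ 2)) < E0 := by
  set u := E1 / E0 with hu_def
  have hu2 : u ^ 2 < 1 := by
    have := abs_nonneg u
    nlinarith [sq_abs u]
  have hu2n : (0:ℝ) ≤ u ^ 2 := sq_nonneg u
  set s := Real.sqrt (4 - 3 * u ^ 2) with hs_def
  have hsq : s ^ 2 = 4 - 3 * u ^ 2 := Real.sq_sqrt (by nlinarith)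
  have hs1 : 1 ≤ s := by
    rw [hs_def]
    rw [show (1:ℝ) = Real.sqrt 1 by simp]
    exact Real.sqrt_le_sqrt (by nlinarith)
  have hden : (0:ℝ) < 5 + 2 * s := by nlinarith
  have hE1 : E1 = u * E0 := by rw [hu_def, div_mul_cancel₀ E1 hE0.ne']
  have h1 : (0:ℝ) < 1 - u ^ 2 := by linarith
  have h2 : (0:ℝ) < 3 * (1 - u ^ 2) ^ 2 * (4 * u ^ 2 + 3) := by positivity
  have hprod : 0 < (3 - u ^ 2 - 2 * s * u ^ 2) * (3 - u ^ 2 + 2 * s * u ^ 2) := by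
    nlinarith [hsq]
  have hfac2 : 0 < 3 - u ^ 2 + 2 * s * u ^ 2 := by nlinarith [mul_nonneg (by linarith : (0:ℝ) ≤ s) hu2n]
  have hkey : 2 * s * u ^ 2 < 3 - u ^ 2 := by nlinarith [mul_pos hprod (inv_pos.2 hfac2)]
  constructor
  · rw [mul_div_assoc', lt_div_iff₀ hden, hE1]
    nlinarith [mul_pos (mul_pos hE0 hE0) (show (0:ℝ) < 3 + 4 * u ^ 2 - u ^ 2 * (5 + 2 * s) by nlinarith)]
  · rw [div_lt_iff₀ hden]
    nlinarith [sq_nonneg (u ^ 2 - 1), sq_nonneg (s - 2 * u ^ 2 + 1)]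
end

section
/- Let ω be a positive normalized weight on [-1,1] and Î_* = ω·Σ_{m=0}^N f_m φ_m(μ) the unique weighted polynomial expansion matching moments E_0,…,E_N (with φ_m the monic orthogonal polynomials for ω). Then Î_* minimizes the functional J(I) = ∫_{-1}^1 I(μ)²/ω(μ) dμ among all functions I ∈ L²(ω⁻¹dμ) satisfying ∫_{-1}^1 μ^k I(μ) dμ = E_k for k = 0,…,N. -/
open MeasureTheory intervalIntegral

private lemma aux_int {N : ℕ} (p : Polynomial ℝ) (hp : p.natDegree < N + 1)
    (g : ℝ → ℝ) (hg : ∀ k : ℕ, IntervalIntegrable (fun μ => μ ^ k * g μ) volume (-1) 1) :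
    IntervalIntegrable (fun μ => p.eval μ * g μ) volume (-1) 1 := by
  have hfun : (fun μ : ℝ => p.eval μ * g μ)
      = ∑ k ∈ Finset.range (N + 1), (fun μ => p.coeff k * (μ ^ k * g μ)) := by
    funext μ
    rw [Finset.sum_apply, Polynomial.eval_eq_sum_range' hp, Finset.sum_mul]
    exact Finset.sum_congr rfl fun k _ => by ring
  rw [hfun]
  exact IntervalIntegrable.sum _ fun k _ => (hg k).const_mul _

private lemma aux_eval {N : ℕ} (p : Polynomial ℝ) (hp : p.natDegree < N + 1)
    (g : ℝ → ℝ) (hg : ∀ k : ℕ, IntervalIntegrable (fun μ => μ ^ k * g μ) volume (-1) 1) :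
    ∫ μ in (-1 : ℝ)..1, p.eval μ * g μ
      = ∑ k ∈ Finset.range (N + 1), p.coeff k * ∫ μ in (-1 : ℝ)..1, μ ^ k * g μ := by
  have hfun : ∀ μ : ℝ, p.eval μ * g μ
      = ∑ k ∈ Finset.range (N + 1), p.coeff k * (μ ^ k * g μ) := by
    intro μ
    rw [Polynomial.eval_eq_sum_range' hp, Finset.sum_mul]
    exact Finset.sum_congr rfl fun k _ => by ring
  simp only [hfun]
  rw [intervalIntegral.integral_finset_sum fun k _ => (hg k).const_mul _]
  exact Finset.sum_congr rfl fun k _ => intervalIntegral.integral_const_mul _ _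

/-- Variational characterization of the weighted expansion ansatz:
`Î_* = ω Σ f_m φ_m`, matching the moments `E₀,…,E_N`, minimizes
`J(I) = ∫_{-1}^1 I(μ)²/ω(μ) dμ` among all moment-matching functions. -/
theorem weighted_expansion_minimizes_quadratic_entropy (N : ℕ) (ω : ℝ → ℝ)
    (hω : ∀ μ ∈ Set.Icc (-1 : ℝ) 1, 0 < ω μ)
    (hnorm : ∫ μ in (-1 : ℝ)..1, ω μ = 1)
    (hint : ∀ k : ℕ, IntervalIntegrable (fun μ => μ ^ k * ω μ) volume (-1) 1)
    (φ : ℕ → Polynomial ℝ)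
    (hmonic : ∀ m ≤ N, (φ m).Monic)
    (hdeg : ∀ m ≤ N, (φ m).natDegree = m)
    (horth : ∀ m ≤ N, ∀ n ≤ N, m ≠ n →
      ∫ μ in (-1 : ℝ)..1, (φ m).eval μ * (φ n).eval μ * ω μ = 0)
    (f : Fin (N + 1) → ℝ) (E : Fin (N + 1) → ℝ)
    (Ihat : ℝ → ℝ)
    (hIhat : ∀ μ, Ihat μ = ω μ * ∑ m : Fin (N + 1), f m * (φ (m : ℕ)).eval μ)
    (hmatch : ∀ k : Fin (N + 1), ∫ μ in (-1 : ℝ)..1, μ ^ (k : ℕ) * Ihat μ = E k)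
    (I : ℝ → ℝ)
    (hI2 : IntervalIntegrable (fun μ => (I μ) ^ 2 / ω μ) volume (-1) 1)
    (hIk : ∀ k : ℕ, IntervalIntegrable (fun μ => μ ^ k * I μ) volume (-1) 1)
    (hconstr : ∀ k : Fin (N + 1), ∫ μ in (-1 : ℝ)..1, μ ^ (k : ℕ) * I μ = E k) :
    ∫ μ in (-1 : ℝ)..1, (Ihat μ) ^ 2 / ω μ ≤ ∫ μ in (-1 : ℝ)..1, (I μ) ^ 2 / ω μ := by
  set P : Polynomial ℝ := ∑ m : Fin (N + 1), Polynomial.C (f m) * φ (m : ℕ) with hPdef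
  have hPeval : ∀ μ : ℝ, P.eval μ = ∑ m : Fin (N + 1), f m * (φ (m : ℕ)).eval μ := by
    intro μ; simp [hPdef, Polynomial.eval_finset_sum]
  have hIhat' : ∀ μ : ℝ, Ihat μ = ω μ * P.eval μ := by
    intro μ; rw [hIhat, hPeval]
  have hPdeg : P.natDegree < N + 1 := by
    refine Nat.lt_succ_of_le (Polynomial.natDegree_sum_le_of_forall_le _ _ fun m _ => ?_)
    calc (Polynomial.C (f m) * φ (m : ℕ)).natDegree ≤ (φ (m : ℕ)).natDegree :=
          Polynomial.natDegree_C_mul_le _ _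
      _ ≤ N := by rw [hdeg (m : ℕ) (Nat.lt_succ_iff.mp m.2)]; exact Nat.lt_succ_iff.mp m.2
  -- integrability of μ^k * (μ^j * ω)
  have hintk : ∀ k j : ℕ, IntervalIntegrable (fun μ => μ ^ j * (μ ^ k * ω μ)) volume (-1) 1 := by
    intro k j
    have := hint (j + k)
    have hfun : (fun μ : ℝ => μ ^ j * (μ ^ k * ω μ)) = fun μ => μ ^ (j + k) * ω μ := by
      funext μ; rw [pow_add]; ring
    rwa [hfun]
  -- integrability of μ^k * Ihat
  have hIhatk : ∀ k : ℕ, IntervalIntegrable (fun μ => μ ^ k * Ihat μ) volume (-1) 1 := by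
    intro k
    have hfun : (fun μ : ℝ => μ ^ k * Ihat μ) = fun μ => P.eval μ * (μ ^ k * ω μ) := by
      funext μ; rw [hIhat' μ]; ring
    rw [hfun]
    exact aux_int P hPdeg _ (fun j => hintk k j)
  -- ∫ P I = ∫ P Ihat
  have hPI : (∫ μ in (-1 : ℝ)..1, P.eval μ * I μ) = ∫ μ in (-1 : ℝ)..1, P.eval μ * Ihat μ := by
    rw [aux_eval P hPdeg I hIk, aux_eval P hPdeg Ihat hIhatk]
    refine Finset.sum_congr rfl fun k hk => ?_
    have hkN : k < N + 1 := Finset.mem_range.mp hk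
    rw [hconstr ⟨k, hkN⟩, hmatch ⟨k, hkN⟩]
  -- ∫ P Ihat = ∫ ω P^2
  have hPIhat : (∫ μ in (-1 : ℝ)..1, P.eval μ * Ihat μ)
      = ∫ μ in (-1 : ℝ)..1, ω μ * (P.eval μ) ^ 2 := by
    refine intervalIntegral.integral_congr fun μ _ => ?_
    rw [hIhat' μ]; ring
  -- integrability of ω P^2 = P * (P * ω)
  have hωP2 : IntervalIntegrable (fun μ => ω μ * (P.eval μ) ^ 2) volume (-1) 1 := by
    have hPω : ∀ k : ℕ, IntervalIntegrable (fun μ => μ ^ k * (P.eval μ * ω μ)) volume (-1) 1 := by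
      intro k
      have hfun : (fun μ : ℝ => μ ^ k * (P.eval μ * ω μ))
          = fun μ => P.eval μ * (μ ^ k * ω μ) := by funext μ; ring
      rw [hfun]
      exact aux_int P hPdeg _ (fun j => hintk k j)
    have := aux_int P hPdeg (fun μ => P.eval μ * ω μ) hPω
    have hfun : (fun μ : ℝ => P.eval μ * (P.eval μ * ω μ))
        = fun μ => ω μ * (P.eval μ) ^ 2 := by funext μ; ring
    rwa [hfun] at this
  have hPIint : IntervalIntegrable (fun μ => P.eval μ * I μ) volume (-1) 1 :=
    aux_int P hPdeg I hIk
  -- ∫ Ihat^2/ω = ∫ ω P^2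
  have hJIhat : (∫ μ in (-1 : ℝ)..1, (Ihat μ) ^ 2 / ω μ)
      = ∫ μ in (-1 : ℝ)..1, ω μ * (P.eval μ) ^ 2 := by
    refine intervalIntegral.integral_congr fun μ hμ => ?_
    have hμ' : μ ∈ Set.Icc (-1 : ℝ) 1 := by
      rwa [Set.uIcc_of_le (by norm_num : (-1 : ℝ) ≤ 1)] at hμ
    have hωpos := hω μ hμ'
    rw [hIhat' μ]
    field_simp
  -- pointwise inequality and monotonicity
  have hmono : (∫ μ in (-1 : ℝ)..1, (2 * (P.eval μ * I μ) - ω μ * (P.eval μ) ^ 2))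
      ≤ ∫ μ in (-1 : ℝ)..1, (I μ) ^ 2 / ω μ := by
    refine intervalIntegral.integral_mono_on (by norm_num)
      ((hPIint.const_mul 2).sub hωP2) hI2 fun μ hμ => ?_
    have hωpos := hω μ hμ
    rw [le_div_iff₀ hωpos]
    nlinarith [sq_nonneg (I μ - ω μ * P.eval μ), hωpos]
  have hsplit : (∫ μ in (-1 : ℝ)..1, (2 * (P.eval μ * I μ) - ω μ * (P.eval μ) ^ 2))
      = 2 * (∫ μ in (-1 : ℝ)..1, P.eval μ * I μ) - ∫ μ in (-1 : ℝ)..1, ω μ * (P.eval μ) ^ 2 := by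
    rw [intervalIntegral.integral_sub (hPIint.const_mul 2) hωP2,
      intervalIntegral.integral_const_mul]
  rw [hJIhat]
  calc (∫ μ in (-1 : ℝ)..1, ω μ * (P.eval μ) ^ 2)
      = 2 * (∫ μ in (-1 : ℝ)..1, P.eval μ * I μ)
        - ∫ μ in (-1 : ℝ)..1, ω μ * (P.eval μ) ^ 2 := by
        rw [hPI, hPIhat]; ring
    _ = ∫ μ in (-1 : ℝ)..1, (2 * (P.eval μ * I μ) - ω μ * (P.eval μ) ^ 2) := hsplit.symm
    _ ≤ ∫ μ in (-1 : ℝ)..1, (I μ) ^ 2 / ω μ := hmono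
end

section
/- For the MP₂ model, at E_1 = 0 the partial derivative ∂E_3/∂E_1 is strictly positive on the realizable domain; moreover its value restricted to E_2 = E_1²/E_0 as α → 0 equals 12/35. -/
open MeasureTheory intervalIntegral

/-- The M₁ parameter `α` as a function of `u = E₁/E₀`. -/
noncomputable def mpAlpha (u : ℝ) : ℝ := -(3 * u) / (2 + Real.sqrt (4 - 3 * u ^ 2))

/-- Normalization constant of the M₁ weight. -/
noncomputable def mpEps (a : ℝ) : ℝ := 3 * (1 - a ^ 2) ^ 3 / (2 * (3 + a ^ 2))

/-- The normalized M₁ ansatz used as weight function, as a function of `u = E₁/E₀`. -/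
noncomputable def mpWeight (u μ : ℝ) : ℝ := mpEps (mpAlpha u) / (1 + mpAlpha u * μ) ^ 4

/-- Moments `𝓔_k` of the weight function. -/
noncomputable def mpMoment (u : ℝ) (k : ℕ) : ℝ := ∫ μ in (-1 : ℝ)..1, μ ^ k * mpWeight u μ

/-- `β = (𝓔₃ - 𝓔₂𝓔₁)/(𝓔₂ - 𝓔₁²)`. -/
noncomputable def mpBeta (u : ℝ) : ℝ :=
  (mpMoment u 3 - mpMoment u 2 * mpMoment u 1) / (mpMoment u 2 - (mpMoment u 1) ^ 2)

/-- Expansion coefficient `f₂` of the MP₂ model. -/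
noncomputable def mpF2 (E0 E1 E2 : ℝ) : ℝ :=
  (E2 - E0 * mpMoment (E1 / E0) 2) /
    (mpMoment (E1 / E0) 4 - (mpMoment (E1 / E0) 2) ^ 2 -
      mpBeta (E1 / E0) * (mpMoment (E1 / E0) 3 - mpMoment (E1 / E0) 1 * mpMoment (E1 / E0) 2))

/-- The MP₂ closure moment `E₃(E₀,E₁,E₂)`. -/
noncomputable def mpE3 (E0 E1 E2 : ℝ) : ℝ :=
  E0 * mpMoment (E1 / E0) 3 +
    mpF2 E0 E1 E2 *
      (mpMoment (E1 / E0) 5 - mpMoment (E1 / E0) 2 * mpMoment (E1 / E0) 3 -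
        mpBeta (E1 / E0) * (mpMoment (E1 / E0) 4 - mpMoment (E1 / E0) 1 * mpMoment (E1 / E0) 3))

/- auxiliary -/
noncomputable def mpS (u : ℝ) : ℝ := Real.sqrt (4 - 3 * u ^ 2)
noncomputable def mpAlphaD (u : ℝ) : ℝ :=
  (-3 * (2 + mpS u) - 9 * u ^ 2 / mpS u) / (2 + mpS u) ^ 2
noncomputable def mpEpsD (a : ℝ) : ℝ :=
  ((-18 * a * (1 - a ^ 2) ^ 2) * (2 * (3 + a ^ 2)) - 3 * (1 - a ^ 2) ^ 3 * (4 * a)) /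
    (2 * (3 + a ^ 2)) ^ 2
noncomputable def mpWD (u μ : ℝ) : ℝ :=
  (mpEpsD (mpAlpha u) * (1 + mpAlpha u * μ) - 4 * μ * mpEps (mpAlpha u)) /
    (1 + mpAlpha u * μ) ^ 5 * mpAlphaD u

lemma mpS_sq {u : ℝ} (hu : |u| ≤ 1/2) : mpS u ^ 2 = 4 - 3 * u ^ 2 := by
  have h : (0:ℝ) ≤ 4 - 3 * u ^ 2 := by
    have := abs_le.1 hu; nlinarith [this.1, this.2]
  simpa [mpS] using Real.sq_sqrt h

lemma mpS_bounds {u : ℝ} (hu : |u| ≤ 1/2) : 1 ≤ mpS u ∧ mpS u ≤ 2 := by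
  have h2 := mpS_sq hu
  have h0 : 0 ≤ mpS u := Real.sqrt_nonneg _
  have := abs_le.1 hu
  constructor <;> nlinarith [this.1, this.2]

lemma mpAlpha_eq (u : ℝ) : mpAlpha u = -(3 * u) / (2 + mpS u) := rfl

lemma mpAlpha_bound {u : ℝ} (hu : |u| ≤ 1/2) : |mpAlpha u| ≤ 1/2 := by
  obtain ⟨h1, h2⟩ := mpS_bounds hu
  have hden : (0:ℝ) < 2 + mpS u := by linarith
  have := abs_le.1 hu
  rw [mpAlpha_eq, abs_div, abs_of_pos hden, div_le_iff₀ hden]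
  rw [abs_le]; constructor <;> nlinarith [this.1, this.2, abs_nonneg (-(3*u)), le_abs_self (-(3*u)), neg_abs_le (-(3*u))]

lemma hasDerivAt_mpAlpha {u : ℝ} (hu : |u| ≤ 1/2) :
    HasDerivAt mpAlpha (mpAlphaD u) u := by
  obtain ⟨h1, h2⟩ := mpS_bounds hu
  have hSpos : (0:ℝ) < mpS u := by linarith
  have hin : HasDerivAt (fun v : ℝ => 4 - 3 * v ^ 2) (-(6 * u)) u := by
    have := ((hasDerivAt_pow 2 u).const_mul (3:ℝ)).const_sub (4:ℝ)
    exact this.congr_deriv (by ring)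
  have hs : HasDerivAt (fun v : ℝ => mpS v) (-(6*u) / (2 * mpS u)) u := by
    have hne : 4 - 3 * u ^ 2 ≠ 0 := by nlinarith [mpS_sq hu]
    have := (Real.hasDerivAt_sqrt hne).comp u hin
    exact hin.sqrt hne
  have hden : HasDerivAt (fun v : ℝ => 2 + mpS v) (-(6*u) / (2 * mpS u)) u :=
    hs.const_add 2
  have hnum : HasDerivAt (fun v : ℝ => -(3 * v)) (-3 : ℝ) u := by
    simpa using (hasDerivAt_id u).const_mul (-3 : ℝ)
  have hd0 : 2 + mpS u ≠ 0 := by positivity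
  have := hnum.div hden hd0
  refine this.congr_deriv ?_
  rw [mpAlphaD]
  field_simp
  ring


lemma hasDerivAt_mpEps (a : ℝ) : HasDerivAt mpEps (mpEpsD a) a := by
  have hd0 : 2 * (3 + a ^ 2) ≠ 0 := by positivity
  have hnum : HasDerivAt (fun b : ℝ => 3 * (1 - b ^ 2) ^ 3) (-18 * a * (1 - a ^ 2) ^ 2) a := by
    have hb : HasDerivAt (fun b : ℝ => 1 - b ^ 2) (-(2 * a)) a := by
      simpa using ((hasDerivAt_pow 2 a).const_sub (1:ℝ))
    have := ((hb.pow 3).const_mul (3:ℝ))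
    exact this.congr_deriv (by ring)
  have hden : HasDerivAt (fun b : ℝ => 2 * (3 + b ^ 2)) (4 * a) a := by
    have := (((hasDerivAt_pow 2 a).const_add (3:ℝ)).const_mul (2:ℝ))
    exact this.congr_deriv (by ring)
  have := hnum.div hden hd0
  exact this

lemma continuous_mpEpsD : Continuous mpEpsD := by
  apply Continuous.div (by continuity) (by continuity)
  intro a; positivity


lemma one_add_pos {u μ : ℝ} (hu : |u| ≤ 1/2) (hμ : |μ| ≤ 1) :
    1/2 ≤ 1 + mpAlpha u * μ := by
  have ha := abs_le.1 (mpAlpha_bound hu)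
  have hμ' := abs_le.1 hμ
  nlinarith [ha.1, ha.2, hμ'.1, hμ'.2]

lemma hasDerivAt_mpWeight {u μ : ℝ} (hu : |u| ≤ 1/2) (hμ : |μ| ≤ 1) :
    HasDerivAt (fun v => mpWeight v μ) (mpWD u μ) u := by
  set a := mpAlpha u with ha
  have hpos : (0:ℝ) < 1 + a * μ := lt_of_lt_of_le (by norm_num) (one_add_pos hu hμ)
  have hne : (1 + a * μ) ≠ 0 := ne_of_gt hpos
  have hden : HasDerivAt (fun b : ℝ => (1 + b * μ) ^ 4) (4 * (1 + a * μ) ^ 3 * μ) a := by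
    have hb : HasDerivAt (fun b : ℝ => 1 + b * μ) μ a := by
      simpa using ((hasDerivAt_id a).mul_const μ).const_add (1:ℝ)
    have h4 := hb.pow 4
    norm_num at h4
    exact h4
  have hg : HasDerivAt (fun b : ℝ => mpEps b / (1 + b * μ) ^ 4)
      ((mpEpsD a * (1 + a*μ)^4 - mpEps a * (4 * (1+a*μ)^3 * μ)) / ((1+a*μ)^4)^2) a :=
    (hasDerivAt_mpEps a).div hden (by positivity)
  have := hg.comp u (hasDerivAt_mpAlpha hu)
  refine this.congr_deriv ?_
  rw [mpWD]
  rw [div_mul_eq_mul_div, div_mul_eq_mul_div]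
  rw [div_eq_div_iff (by positivity) (by positivity)]
  ring

lemma mpEps_pos_le {a : ℝ} (ha : |a| ≤ 1/2) : 0 < mpEps a ∧ mpEps a ≤ 1/2 := by
  have h := abs_le.1 ha
  have hA : a ^ 2 ≤ 1/4 := by nlinarith [h.1, h.2]
  have hpos : (0:ℝ) < 1 - a ^ 2 := by linarith
  have hc : (0:ℝ) < (1 - a ^ 2) ^ 3 := pow_pos hpos 3
  have hc1 : (1 - a ^ 2) ^ 3 ≤ 1 := by nlinarith [sq_nonneg (1 - a^2)]
  constructor
  · exact div_pos (by linarith) (by nlinarith)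
  · rw [mpEps, div_le_iff₀ (by nlinarith)]; nlinarith

lemma mpEpsD_bound {a : ℝ} (ha : |a| ≤ 1/2) : |mpEpsD a| ≤ 2 := by
  have h := abs_le.1 ha
  have hA : a ^ 2 ≤ 1/4 := by nlinarith [h.1, h.2]
  have hd : (0:ℝ) < (2 * (3 + a ^ 2)) ^ 2 := by positivity
  have hfac : (-18 * a * (1 - a ^ 2) ^ 2) * (2 * (3 + a ^ 2)) - 3 * (1 - a ^ 2) ^ 3 * (4 * a)
      = (-24) * a * ((1 - a ^ 2) ^ 2 * (5 + a ^ 2)) := by ring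
  have h4 : (1 - a ^ 2) ^ 2 * (5 + a ^ 2) ≤ 21/4 := by nlinarith [sq_nonneg a, sq_nonneg (1 - a^2)]
  have h5 : (0:ℝ) ≤ (1 - a ^ 2) ^ 2 * (5 + a ^ 2) := by positivity
  have key : |(-18 * a * (1 - a ^ 2) ^ 2) * (2 * (3 + a ^ 2)) - 3 * (1 - a ^ 2) ^ 3 * (4 * a)| ≤ 63 := by
    rw [hfac, abs_mul, abs_mul, abs_of_nonneg h5]
    have h24 : |(-24:ℝ)| = 24 := by norm_num
    rw [h24]
    nlinarith [abs_nonneg a]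
  have hd36 : (36:ℝ) ≤ (2 * (3 + a ^ 2)) ^ 2 := by nlinarith [sq_nonneg a]
  rw [mpEpsD, abs_div, abs_of_pos hd]
  calc _ ≤ (63:ℝ)/36 := div_le_div₀ (by norm_num) key (by norm_num) hd36
    _ ≤ 2 := by norm_num

lemma mpAlphaD_bound {u : ℝ} (hu : |u| ≤ 1/2) : |mpAlphaD u| ≤ 2 := by
  obtain ⟨h1, h2⟩ := mpS_bounds hu
  have h := abs_le.1 hu
  have hd : (0:ℝ) < (2 + mpS u) ^ 2 := by positivity
  rw [mpAlphaD, abs_div, abs_of_pos hd, div_le_iff₀ hd]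
  have h9 : 9 * u ^ 2 / mpS u ≤ 9 * u ^ 2 := by
    rw [div_le_iff₀ (by linarith)]; nlinarith
  have h9' : 0 ≤ 9 * u ^ 2 / mpS u := by positivity
  rw [abs_le]; constructor <;> nlinarith

lemma mpWeight_bound {u μ : ℝ} (hu : |u| ≤ 1/2) (hμ : |μ| ≤ 1) :
    0 < mpWeight u μ ∧ mpWeight u μ ≤ 8 := by
  have h12 := one_add_pos hu hμ
  have hpos : (0:ℝ) < 1 + mpAlpha u * μ := by linarith
  obtain ⟨he1, he2⟩ := mpEps_pos_le (mpAlpha_bound hu)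
  constructor
  · exact div_pos he1 (by positivity)
  · rw [mpWeight, div_le_iff₀ (by positivity)]
    nlinarith [pow_le_pow_left₀ (by norm_num : (0:ℝ) ≤ 1/2) h12 4]

lemma mpWD_bound {u μ : ℝ} (hu : |u| ≤ 1/2) (hμ : |μ| ≤ 1) : |mpWD u μ| ≤ 320 := by
  have h12 := one_add_pos hu hμ
  have hpos : (0:ℝ) < 1 + mpAlpha u * μ := by linarith
  obtain ⟨he1, he2⟩ := mpEps_pos_le (mpAlpha_bound hu)
  have hED := mpEpsD_bound (mpAlpha_bound hu)
  have hAD := mpAlphaD_bound hu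
  have ha := abs_le.1 (mpAlpha_bound hu)
  have hμ' := abs_le.1 hμ
  have hub : 1 + mpAlpha u * μ ≤ 3/2 := by nlinarith [ha.1, ha.2, hμ'.1, hμ'.2]
  rw [mpWD, abs_mul, abs_div, abs_of_pos (by positivity : (0:ℝ) < (1 + mpAlpha u * μ)^5)]
  have hnum : |mpEpsD (mpAlpha u) * (1 + mpAlpha u * μ) - 4 * μ * mpEps (mpAlpha u)| ≤ 5 := by
    have h1 : |mpEpsD (mpAlpha u) * (1 + mpAlpha u * μ)| ≤ 3 := by
      rw [abs_mul, abs_of_pos hpos]; nlinarith [abs_nonneg (mpEpsD (mpAlpha u))]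
    have h2 : |4 * μ * mpEps (mpAlpha u)| ≤ 2 := by
      rw [abs_mul, abs_mul, abs_of_pos he1]; 
      have : |(4:ℝ)| = 4 := by norm_num
      rw [this]; nlinarith [abs_nonneg μ]
    calc |_| ≤ |mpEpsD (mpAlpha u) * (1 + mpAlpha u * μ)| + |4 * μ * mpEps (mpAlpha u)| :=
          abs_sub _ _
      _ ≤ 5 := by linarith
  have hpow : (1/2:ℝ)^5 ≤ (1 + mpAlpha u * μ)^5 := pow_le_pow_left₀ (by norm_num) h12 5
  have hdiv : |mpEpsD (mpAlpha u) * (1 + mpAlpha u * μ) - 4 * μ * mpEps (mpAlpha u)| /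
      (1 + mpAlpha u * μ)^5 ≤ 5 / (1/2)^5 := by
    apply div_le_div₀ (by positivity) hnum (by positivity) hpow
  calc _ ≤ (5 / (1/2:ℝ)^5) * 2 := by
        apply mul_le_mul hdiv hAD (abs_nonneg _) (by positivity)
    _ = 320 := by norm_num


noncomputable def mpMomentD (u : ℝ) (k : ℕ) : ℝ := ∫ μ in (-1 : ℝ)..1, μ ^ k * mpWD u μ

lemma mem_uIoc_abs {μ : ℝ} (h : μ ∈ Set.uIoc (-1 : ℝ) 1) : |μ| ≤ 1 := by
  rw [Set.uIoc_of_le (by norm_num : (-1:ℝ) ≤ 1)] at h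
  exact abs_le.2 ⟨le_of_lt h.1, h.2⟩

lemma continuous_mpAlpha : Continuous mpAlpha := by
  apply Continuous.div (by continuity) (by continuity)
  intro u
  have := Real.sqrt_nonneg (4 - 3 * u ^ 2)
  positivity

lemma continuousAt_mpAlphaD {u : ℝ} (hu : |u| ≤ 1/2) : ContinuousAt mpAlphaD u := by
  obtain ⟨h1, h2⟩ := mpS_bounds hu
  have hs : Continuous mpS := by unfold mpS; continuity
  have hsne : mpS u ≠ 0 := by linarith
  have hdne : ((2 + mpS u) ^ 2 : ℝ) ≠ 0 := by positivity
  exact (((continuous_const.mul (continuous_const.add hs)).continuousAt.sub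
      (((continuous_const.mul (continuous_pow 2)).continuousAt).div hs.continuousAt hsne)).div
    (((continuous_const.add hs).pow 2).continuousAt) hdne)

lemma continuousAt_mpWD {u μ : ℝ} (hu : |u| ≤ 1/2) (hμ : |μ| ≤ 1) :
    ContinuousAt (fun x => mpWD x μ) u := by
  have hne : ((1 + mpAlpha u * μ) ^ 5 : ℝ) ≠ 0 := by
    have := one_add_pos hu hμ; positivity
  have hA : ContinuousAt mpAlpha u := continuous_mpAlpha.continuousAt
  have hEps : Continuous mpEps := by
    apply Continuous.div (by continuity) (by continuity)
    intro a; positivity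
  exact (((continuous_mpEpsD.continuousAt.comp hA).mul
        ((hA.mul continuousAt_const).const_add 1)).sub
      (continuousAt_const.mul (hEps.continuousAt.comp hA))).div
    (((hA.mul continuousAt_const).const_add 1).pow 5) hne |>.mul (continuousAt_mpAlphaD hu)

lemma meas_weight (x : ℝ) (k : ℕ) :
    AEStronglyMeasurable (fun μ : ℝ => μ ^ k * mpWeight x μ)
      (volume.restrict (Set.uIoc (-1 : ℝ) 1)) := by
  apply Measurable.aestronglyMeasurable
  unfold mpWeight
  exact (measurable_id'.pow_const k).mul
    (measurable_const.div (((measurable_const.mul measurable_id').const_add 1).pow_const 4))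

lemma meas_wd (x : ℝ) (k : ℕ) :
    AEStronglyMeasurable (fun μ : ℝ => μ ^ k * mpWD x μ)
      (volume.restrict (Set.uIoc (-1 : ℝ) 1)) := by
  apply Measurable.aestronglyMeasurable
  unfold mpWD
  exact (measurable_id'.pow_const k).mul
    ((((measurable_const.mul ((measurable_const.mul measurable_id').const_add 1)).sub
      ((measurable_const.mul measurable_id').mul measurable_const)).div
      (((measurable_const.mul measurable_id').const_add 1).pow_const 5)).mul measurable_const)

lemma ball_abs {u : ℝ} (hu : |u| < 1/2) {x : ℝ} (hx : x ∈ Metric.ball u (1/2 - |u|)) :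
    |x| ≤ 1/2 := by
  rw [Metric.mem_ball, Real.dist_eq] at hx
  calc |x| = |(x - u) + u| := by ring_nf
    _ ≤ |x - u| + |u| := abs_add_le _ _
    _ ≤ 1/2 := by linarith

lemma hasDerivAt_mpMoment {u : ℝ} (hu : |u| < 1/2) (k : ℕ) :
    HasDerivAt (fun v => mpMoment v k) (mpMomentD u k) u := by
  have hε : (0:ℝ) < 1/2 - |u| := by linarith
  have hu' : |u| ≤ 1/2 := le_of_lt hu
  have H := (intervalIntegral.hasDerivAt_integral_of_dominated_loc_of_deriv_le
    (F := fun x μ => μ ^ k * mpWeight x μ) (F' := fun x μ => μ ^ k * mpWD x μ)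
    (bound := fun _ => (320:ℝ)) (μ := volume) (a := (-1:ℝ)) (b := (1:ℝ)) (x₀ := u)
    (Metric.ball_mem_nhds u hε) (Filter.Eventually.of_forall fun x => meas_weight x k) ?_ (meas_wd u k) ?_ ?_ ?_).2
  · exact H
  · -- integrability of F u
    apply ContinuousOn.intervalIntegrable
    rw [Set.uIcc_of_le (by norm_num : (-1:ℝ) ≤ 1)]
    apply ContinuousOn.mul (continuous_pow k).continuousOn
    unfold mpWeight
    apply ContinuousOn.div continuousOn_const
      (Continuous.continuousOn (by continuity))
    intro μ hμ
    have h1 : |μ| ≤ 1 := abs_le.2 ⟨hμ.1, hμ.2⟩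
    have := one_add_pos hu' h1
    positivity
  · -- bound on F'
    apply Filter.Eventually.of_forall
    intro μ hμ x hx
    have h1 : |μ| ≤ 1 := mem_uIoc_abs hμ
    have h2 : |x| ≤ 1/2 := ball_abs hu hx
    rw [Real.norm_eq_abs, abs_mul, abs_pow]
    calc |μ| ^ k * |mpWD x μ| ≤ 1 * 320 :=
          mul_le_mul (pow_le_one₀ (abs_nonneg _) h1) (mpWD_bound h2 h1) (abs_nonneg _)
            (by norm_num)
      _ = 320 := by norm_num
  · exact intervalIntegrable_const
  · apply Filter.Eventually.of_forall
    intro μ hμ x hx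
    exact (hasDerivAt_mpWeight (ball_abs hu hx) (mem_uIoc_abs hμ)).const_mul _

lemma continuousAt_mpMoment {u : ℝ} (hu : |u| < 1/2) (k : ℕ) :
    ContinuousAt (fun v => mpMoment v k) u :=
  (hasDerivAt_mpMoment hu k).continuousAt

lemma continuousAt_mpMomentD {u : ℝ} (hu : |u| < 1/2) (k : ℕ) :
    ContinuousAt (fun v => mpMomentD v k) u := by
  have hε : (0:ℝ) < 1/2 - |u| := by linarith
  apply intervalIntegral.continuousAt_of_dominated_interval
    (bound := fun _ => (320:ℝ))
    (Filter.Eventually.of_forall fun x => meas_wd x k)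
  · filter_upwards [Metric.ball_mem_nhds u hε] with x hx
    apply Filter.Eventually.of_forall
    intro μ hμ
    have h1 : |μ| ≤ 1 := mem_uIoc_abs hμ
    have h2 : |x| ≤ 1/2 := ball_abs hu hx
    rw [Real.norm_eq_abs, abs_mul, abs_pow]
    calc |μ| ^ k * |mpWD x μ| ≤ 1 * 320 :=
          mul_le_mul (pow_le_one₀ (abs_nonneg _) h1) (mpWD_bound h2 h1) (abs_nonneg _)
            (by norm_num)
      _ = 320 := by norm_num
  · exact intervalIntegrable_const
  · apply Filter.Eventually.of_forall
    intro μ hμ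
    exact (continuousAt_mpWD (le_of_lt hu) (mem_uIoc_abs hμ)).const_mul _

/-! values at 0 -/

lemma mpS_zero : mpS 0 = 2 := by
  rw [mpS]
  norm_num

lemma mpAlpha_zero : mpAlpha 0 = 0 := by simp [mpAlpha]

lemma mpAlphaD_zero : mpAlphaD 0 = -3/4 := by
  rw [mpAlphaD, mpS_zero]; norm_num

lemma mpEps_zero : mpEps 0 = 1/2 := by rw [mpEps]; norm_num

lemma mpEpsD_zero : mpEpsD 0 = 0 := by rw [mpEpsD]; norm_num

lemma mpWeight_zero (μ : ℝ) : mpWeight 0 μ = 1/2 := by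
  rw [mpWeight, mpAlpha_zero, mpEps_zero]; norm_num

lemma mpWD_zero (μ : ℝ) : mpWD 0 μ = 3/2 * μ := by
  rw [mpWD, mpAlpha_zero, mpEps_zero, mpEpsD_zero, mpAlphaD_zero]; ring

lemma mpMoment_zero_eq (k : ℕ) :
    mpMoment 0 k = ((1:ℝ) ^ (k+1) - (-1:ℝ) ^ (k+1)) / (k + 1) * (1/2) := by
  rw [mpMoment]
  have h : (fun μ : ℝ => μ ^ k * mpWeight 0 μ) = fun μ : ℝ => μ ^ k * (1/2) := by
    funext μ; rw [mpWeight_zero]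
  rw [h, intervalIntegral.integral_mul_const, integral_pow]

lemma mpMomentD_zero_eq (k : ℕ) :
    mpMomentD 0 k = ((1:ℝ) ^ (k+2) - (-1:ℝ) ^ (k+2)) / (k + 1 + 1) * (3/2) := by
  rw [mpMomentD]
  have h : (fun μ : ℝ => μ ^ k * mpWD 0 μ) = fun μ : ℝ => μ ^ (k+1) * (3/2) := by
    funext μ; rw [mpWD_zero]; ring
  rw [h, intervalIntegral.integral_mul_const, integral_pow]
  norm_num

lemma mpMoment_zero1 : mpMoment 0 1 = 0 := by rw [mpMoment_zero_eq]; norm_num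
lemma mpMoment_zero2 : mpMoment 0 2 = 1/3 := by rw [mpMoment_zero_eq]; norm_num
lemma mpMoment_zero3 : mpMoment 0 3 = 0 := by rw [mpMoment_zero_eq]; norm_num
lemma mpMoment_zero4 : mpMoment 0 4 = 1/5 := by rw [mpMoment_zero_eq]; norm_num
lemma mpMoment_zero5 : mpMoment 0 5 = 0 := by rw [mpMoment_zero_eq]; norm_num
lemma mpMomentD_zero1 : mpMomentD 0 1 = 1 := by rw [mpMomentD_zero_eq]; norm_num
lemma mpMomentD_zero2 : mpMomentD 0 2 = 0 := by rw [mpMomentD_zero_eq]; norm_num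
lemma mpMomentD_zero3 : mpMomentD 0 3 = 3/5 := by rw [mpMomentD_zero_eq]; norm_num
lemma mpMomentD_zero4 : mpMomentD 0 4 = 0 := by rw [mpMomentD_zero_eq]; norm_num
lemma mpMomentD_zero5 : mpMomentD 0 5 = 3/7 := by rw [mpMomentD_zero_eq]; norm_num


/-! algebra layer -/

noncomputable def mQ (u : ℝ) : ℝ :=
  mpMoment u 4 - mpMoment u 2 ^ 2 - mpBeta u * (mpMoment u 3 - mpMoment u 1 * mpMoment u 2)
noncomputable def mP (u : ℝ) : ℝ :=
  mpMoment u 5 - mpMoment u 2 * mpMoment u 3 - mpBeta u * (mpMoment u 4 - mpMoment u 1 * mpMoment u 3)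
noncomputable def mDB (E0 u : ℝ) : ℝ :=
  ((mpMomentD u 3 / E0 - (mpMomentD u 2 / E0 * mpMoment u 1 + mpMoment u 2 * (mpMomentD u 1 / E0))) *
      (mpMoment u 2 - mpMoment u 1 ^ 2) -
    (mpMoment u 3 - mpMoment u 2 * mpMoment u 1) *
      (mpMomentD u 2 / E0 - 2 * mpMoment u 1 * (mpMomentD u 1 / E0))) /
    (mpMoment u 2 - mpMoment u 1 ^ 2) ^ 2
noncomputable def mDQ (E0 u : ℝ) : ℝ :=
  mpMomentD u 4 / E0 - 2 * mpMoment u 2 * (mpMomentD u 2 / E0) -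
    (mDB E0 u * (mpMoment u 3 - mpMoment u 1 * mpMoment u 2) +
      mpBeta u * (mpMomentD u 3 / E0 - (mpMomentD u 1 / E0 * mpMoment u 2 + mpMoment u 1 * (mpMomentD u 2 / E0))))
noncomputable def mDP (E0 u : ℝ) : ℝ :=
  mpMomentD u 5 / E0 - (mpMomentD u 2 / E0 * mpMoment u 3 + mpMoment u 2 * (mpMomentD u 3 / E0)) -
    (mDB E0 u * (mpMoment u 4 - mpMoment u 1 * mpMoment u 3) +
      mpBeta u * (mpMomentD u 4 / E0 - (mpMomentD u 1 / E0 * mpMoment u 3 + mpMoment u 1 * (mpMomentD u 3 / E0))))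
noncomputable def mpD1 (E0 c y : ℝ) : ℝ :=
  E0 * (mpMomentD (y / E0) 3 / E0) +
    (((-(E0 * (mpMomentD (y / E0) 2 / E0)) * mQ (y / E0) -
        (c - E0 * mpMoment (y / E0) 2) * mDQ E0 (y / E0)) / mQ (y / E0) ^ 2) * mP (y / E0) +
      (c - E0 * mpMoment (y / E0) 2) / mQ (y / E0) * mDP E0 (y / E0))

set_option maxHeartbeats 2000000 in
lemma hasDerivAt_mpE3 (E0 c y : ℝ) (hE0 : E0 ≠ 0) (hy : |y / E0| < 1/2)
    (hden1 : mpMoment (y / E0) 2 - mpMoment (y / E0) 1 ^ 2 ≠ 0)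
    (hQnum : (mpMoment (y / E0) 4 - mpMoment (y / E0) 2 ^ 2) *
        (mpMoment (y / E0) 2 - mpMoment (y / E0) 1 ^ 2) -
      (mpMoment (y / E0) 3 - mpMoment (y / E0) 2 * mpMoment (y / E0) 1) *
        (mpMoment (y / E0) 3 - mpMoment (y / E0) 1 * mpMoment (y / E0) 2) ≠ 0) :
    HasDerivAt (fun z => mpE3 E0 z c) (mpD1 E0 c y) y := by
  have hdiv : HasDerivAt (fun z : ℝ => z / E0) (1 / E0) y := by
    simpa using (hasDerivAt_id y).div_const E0
  have hm : ∀ k : ℕ, HasDerivAt (fun z => mpMoment (z / E0) k)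
      (mpMomentD (y / E0) k * (1 / E0)) y := fun k =>
    by have := (hasDerivAt_mpMoment hy k).comp y hdiv; exact this
  have hden2 : mpMoment (y / E0) 4 - mpMoment (y / E0) 2 ^ 2 -
      (mpMoment (y / E0) 3 - mpMoment (y / E0) 2 * mpMoment (y / E0) 1) /
        (mpMoment (y / E0) 2 - mpMoment (y / E0) 1 ^ 2) *
      (mpMoment (y / E0) 3 - mpMoment (y / E0) 1 * mpMoment (y / E0) 2) ≠ 0 := by
    have heq : mpMoment (y / E0) 4 - mpMoment (y / E0) 2 ^ 2 -
        (mpMoment (y / E0) 3 - mpMoment (y / E0) 2 * mpMoment (y / E0) 1) /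
          (mpMoment (y / E0) 2 - mpMoment (y / E0) 1 ^ 2) *
        (mpMoment (y / E0) 3 - mpMoment (y / E0) 1 * mpMoment (y / E0) 2) =
        ((mpMoment (y / E0) 4 - mpMoment (y / E0) 2 ^ 2) *
          (mpMoment (y / E0) 2 - mpMoment (y / E0) 1 ^ 2) -
        (mpMoment (y / E0) 3 - mpMoment (y / E0) 2 * mpMoment (y / E0) 1) *
          (mpMoment (y / E0) 3 - mpMoment (y / E0) 1 * mpMoment (y / E0) 2)) /
        (mpMoment (y / E0) 2 - mpMoment (y / E0) 1 ^ 2) := by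
      field_simp
    rw [heq]
    exact div_ne_zero hQnum hden1
  have hB := ((hm 3).sub ((hm 2).mul (hm 1))).div ((hm 2).sub ((hm 1).pow 2)) hden1
  have hQ := ((hm 4).sub ((hm 2).pow 2)).sub (hB.mul ((hm 3).sub ((hm 1).mul (hm 2))))
  have hF := (((hm 2).const_mul E0).const_sub c).div hQ hden2
  have hP := ((hm 5).sub ((hm 2).mul (hm 3))).sub (hB.mul ((hm 4).sub ((hm 1).mul (hm 3))))
  have hE3 := ((hm 3).const_mul E0).add (hF.mul hP)
  have hfun : (fun z => mpE3 E0 z c) = (fun z =>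
      E0 * mpMoment (z / E0) 3 +
        (c - E0 * mpMoment (z / E0) 2) /
          (mpMoment (z / E0) 4 - mpMoment (z / E0) 2 ^ 2 -
            (mpMoment (z / E0) 3 - mpMoment (z / E0) 2 * mpMoment (z / E0) 1) /
              (mpMoment (z / E0) 2 - mpMoment (z / E0) 1 ^ 2) *
            (mpMoment (z / E0) 3 - mpMoment (z / E0) 1 * mpMoment (z / E0) 2)) *
        (mpMoment (z / E0) 5 - mpMoment (z / E0) 2 * mpMoment (z / E0) 3 -
          (mpMoment (z / E0) 3 - mpMoment (z / E0) 2 * mpMoment (z / E0) 1) /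
            (mpMoment (z / E0) 2 - mpMoment (z / E0) 1 ^ 2) *
          (mpMoment (z / E0) 4 - mpMoment (z / E0) 1 * mpMoment (z / E0) 3))) := by
    funext z; rw [mpE3, mpF2, mpBeta]
  rw [hfun]
  refine hE3.congr_deriv ?_
  rw [mpD1, mDP, mDQ, mDB, mP, mQ, mpBeta]
  push_cast
  simp only [Pi.sub_apply, Pi.mul_apply, Pi.div_apply, Pi.pow_apply, Nat.add_one_sub_one, pow_one]
  field_simp

/-! evaluation of the algebra layer at `u = 0` -/

lemma mpBeta_zero : mpBeta 0 = 0 := by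
  rw [mpBeta, mpMoment_zero1, mpMoment_zero2, mpMoment_zero3]; norm_num

lemma mQ_zero : mQ 0 = 4/45 := by
  rw [mQ, mpBeta_zero, mpMoment_zero1, mpMoment_zero2, mpMoment_zero3, mpMoment_zero4]; norm_num

lemma mP_zero : mP 0 = 0 := by
  rw [mP, mpBeta_zero, mpMoment_zero1, mpMoment_zero2, mpMoment_zero3, mpMoment_zero4,
    mpMoment_zero5]; norm_num

lemma mpD1_zero (E0 c : ℝ) (hE0 : E0 ≠ 0) : mpD1 E0 c 0 = 12/35 + 27/35 * (c / E0) := by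
  simp only [mpD1, mDP, mDQ, mDB, mP, mQ, mpBeta, zero_div, mpMoment_zero1, mpMoment_zero2,
    mpMoment_zero3, mpMoment_zero4, mpMoment_zero5, mpMomentD_zero1, mpMomentD_zero2,
    mpMomentD_zero3, mpMomentD_zero4, mpMomentD_zero5]
  field_simp
  ring


/-- At `E₁ = 0` the partial derivative `∂E₃/∂E₁` is strictly positive on the
realizable domain; moreover, its value restricted to `E₂ = E₁²/E₀` tends to
`12/35` as `E₁ → 0` (i.e. as `α → 0`). -/
theorem MP2_dE3_dE1_at_zero (E0 E2 : ℝ) (h0 : 0 < E0) (h2pos : 0 < E2) (h2 : E2 < E0) :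
    0 < deriv (fun y => mpE3 E0 y E2) 0 ∧
    Filter.Tendsto (fun E1 : ℝ => deriv (fun y => mpE3 E0 y (E1 ^ 2 / E0)) E1)
      (nhdsWithin 0 {(0 : ℝ)}ᶜ) (nhds (12 / 35)) := by
  have hE0 : E0 ≠ 0 := ne_of_gt h0
  have hzero : (0:ℝ) / E0 = 0 := zero_div E0
  constructor
  · -- part 1
    have H := hasDerivAt_mpE3 E0 E2 0 hE0
      (by rw [hzero]; norm_num)
      (by rw [hzero, mpMoment_zero1, mpMoment_zero2]; norm_num)
      (by rw [hzero, mpMoment_zero1, mpMoment_zero2, mpMoment_zero3, mpMoment_zero4]; norm_num)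
    rw [H.deriv, mpD1_zero E0 E2 hE0]
    have hdiv : 0 < E2 / E0 := div_pos h2pos h0
    linarith
  · -- part 2
    have hmc : ∀ k, ContinuousAt (fun E1 : ℝ => mpMoment (E1 / E0) k) 0 := by
      intro k
      have h : ContinuousAt (fun v => mpMoment v k) ((0:ℝ) / E0) := by
        rw [hzero]; exact continuousAt_mpMoment (by norm_num) k
      exact ContinuousAt.comp (f := fun E1 : ℝ => E1 / E0) h (continuousAt_id.div_const E0)
    have hdc : ∀ k, ContinuousAt (fun E1 : ℝ => mpMomentD (E1 / E0) k) 0 := by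
      intro k
      have h : ContinuousAt (fun v => mpMomentD v k) ((0:ℝ) / E0) := by
        rw [hzero]; exact continuousAt_mpMomentD (by norm_num) k
      exact ContinuousAt.comp (f := fun E1 : ℝ => E1 / E0) h (continuousAt_id.div_const E0)
    have hden1v : mpMoment ((0:ℝ) / E0) 2 - mpMoment ((0:ℝ) / E0) 1 ^ 2 ≠ 0 := by
      rw [hzero, mpMoment_zero1, mpMoment_zero2]; norm_num
    have hBc : ContinuousAt (fun E1 : ℝ => mpBeta (E1 / E0)) 0 := by
      unfold mpBeta
      exact ((hmc 3).sub ((hmc 2).mul (hmc 1))).div ((hmc 2).sub ((hmc 1).pow 2)) hden1v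
    have hQc : ContinuousAt (fun E1 : ℝ => mQ (E1 / E0)) 0 := by
      unfold mQ
      exact ((hmc 4).sub ((hmc 2).pow 2)).sub (hBc.mul ((hmc 3).sub ((hmc 1).mul (hmc 2))))
    have hPc : ContinuousAt (fun E1 : ℝ => mP (E1 / E0)) 0 := by
      unfold mP
      exact ((hmc 5).sub ((hmc 2).mul (hmc 3))).sub (hBc.mul ((hmc 4).sub ((hmc 1).mul (hmc 3))))
    have hden1sq : (mpMoment ((0:ℝ) / E0) 2 - mpMoment ((0:ℝ) / E0) 1 ^ 2) ^ 2 ≠ 0 :=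
      pow_ne_zero 2 hden1v
    have hDBc : ContinuousAt (fun E1 : ℝ => mDB E0 (E1 / E0)) 0 := by
      unfold mDB
      exact (((((hdc 3).div_const E0).sub ((((hdc 2).div_const E0).mul (hmc 1)).add
          ((hmc 2).mul ((hdc 1).div_const E0)))).mul ((hmc 2).sub ((hmc 1).pow 2))).sub
        (((hmc 3).sub ((hmc 2).mul (hmc 1))).mul (((hdc 2).div_const E0).sub
          ((continuousAt_const.mul (hmc 1)).mul ((hdc 1).div_const E0))))).div
        (((hmc 2).sub ((hmc 1).pow 2)).pow 2) hden1sq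
    have hDQc : ContinuousAt (fun E1 : ℝ => mDQ E0 (E1 / E0)) 0 := by
      unfold mDQ
      exact (((hdc 4).div_const E0).sub ((continuousAt_const.mul (hmc 2)).mul
          ((hdc 2).div_const E0))).sub
        ((hDBc.mul ((hmc 3).sub ((hmc 1).mul (hmc 2)))).add (hBc.mul
          (((hdc 3).div_const E0).sub ((((hdc 1).div_const E0).mul (hmc 2)).add
            ((hmc 1).mul ((hdc 2).div_const E0))))))
    have hDPc : ContinuousAt (fun E1 : ℝ => mDP E0 (E1 / E0)) 0 := by
      unfold mDP
      exact (((hdc 5).div_const E0).sub ((((hdc 2).div_const E0).mul (hmc 3)).add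
          ((hmc 2).mul ((hdc 3).div_const E0)))).sub
        ((hDBc.mul ((hmc 4).sub ((hmc 1).mul (hmc 3)))).add (hBc.mul
          (((hdc 4).div_const E0).sub ((((hdc 1).div_const E0).mul (hmc 3)).add
            ((hmc 1).mul ((hdc 3).div_const E0))))))
    have hCc : ContinuousAt (fun E1 : ℝ => E1 ^ 2 / E0) 0 :=
      ((continuous_pow 2).div_const E0).continuousAt
    have hQv : mQ ((0:ℝ) / E0) ≠ 0 := by rw [hzero, mQ_zero]; norm_num
    have hQv2 : mQ ((0:ℝ) / E0) ^ 2 ≠ 0 := pow_ne_zero 2 hQv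
    have hψc : ContinuousAt (fun E1 : ℝ => mpD1 E0 (E1 ^ 2 / E0) E1) 0 := by
      unfold mpD1
      exact (continuousAt_const.mul ((hdc 3).div_const E0)).add
        ((((((continuousAt_const.mul ((hdc 2).div_const E0)).neg.mul hQc).sub
          ((hCc.sub (continuousAt_const.mul (hmc 2))).mul hDQc)).div (hQc.pow 2) hQv2).mul
          hPc).add
        (((hCc.sub (continuousAt_const.mul (hmc 2))).div hQc hQv).mul hDPc))
    have hψ0 : mpD1 E0 ((0:ℝ) ^ 2 / E0) 0 = 12/35 := by
      rw [mpD1_zero E0 _ hE0]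
      norm_num
    have hψ : Filter.Tendsto (fun E1 : ℝ => mpD1 E0 (E1 ^ 2 / E0) E1) (nhds 0)
        (nhds (12/35)) := by
      have := hψc.tendsto
      rwa [hψ0] at this
    -- eventual equality of the derivative with mpD1
    have T : Filter.Tendsto (fun E1 : ℝ => E1 / E0) (nhds 0) (nhds 0) := by
      have hin : ContinuousAt (fun E1 : ℝ => E1 / E0) 0 := continuousAt_id.div_const E0
      simpa [zero_div] using hin.tendsto
    have eu1 : ∀ᶠ u in nhds (0:ℝ), |u| < 1/2 := by
      have hmem : Set.Ioo (-(1/2):ℝ) (1/2) ∈ nhds (0:ℝ) :=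
        Ioo_mem_nhds (by norm_num) (by norm_num)
      filter_upwards [hmem] with u hu
      exact abs_lt.2 ⟨hu.1, hu.2⟩
    have eu2 : ∀ᶠ u in nhds (0:ℝ), mpMoment u 2 - mpMoment u 1 ^ 2 ≠ 0 := by
      have hc : ContinuousAt (fun u : ℝ => mpMoment u 2 - mpMoment u 1 ^ 2) 0 :=
        (continuousAt_mpMoment (by norm_num) 2).sub
          ((continuousAt_mpMoment (by norm_num) 1).pow 2)
      apply hc.eventually_ne
      rw [mpMoment_zero1, mpMoment_zero2]; norm_num
    have eu3 : ∀ᶠ u in nhds (0:ℝ),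
        (mpMoment u 4 - mpMoment u 2 ^ 2) * (mpMoment u 2 - mpMoment u 1 ^ 2) -
          (mpMoment u 3 - mpMoment u 2 * mpMoment u 1) *
            (mpMoment u 3 - mpMoment u 1 * mpMoment u 2) ≠ 0 := by
      have hc : ContinuousAt (fun u : ℝ =>
          (mpMoment u 4 - mpMoment u 2 ^ 2) * (mpMoment u 2 - mpMoment u 1 ^ 2) -
            (mpMoment u 3 - mpMoment u 2 * mpMoment u 1) *
              (mpMoment u 3 - mpMoment u 1 * mpMoment u 2)) 0 := by
        have m1 := continuousAt_mpMoment (u := 0) (by norm_num) 1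
        have m2 := continuousAt_mpMoment (u := 0) (by norm_num) 2
        have m3 := continuousAt_mpMoment (u := 0) (by norm_num) 3
        have m4 := continuousAt_mpMoment (u := 0) (by norm_num) 4
        exact ((m4.sub (m2.pow 2)).mul (m2.sub (m1.pow 2))).sub
          ((m3.sub (m2.mul m1)).mul (m3.sub (m1.mul m2)))
      apply hc.eventually_ne
      rw [mpMoment_zero1, mpMoment_zero2, mpMoment_zero3, mpMoment_zero4]; norm_num
    have hEv : ∀ᶠ E1 in nhds (0:ℝ),
        deriv (fun y => mpE3 E0 y (E1 ^ 2 / E0)) E1 = mpD1 E0 (E1 ^ 2 / E0) E1 := by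
      filter_upwards [T.eventually eu1, T.eventually eu2, T.eventually eu3] with E1 h1 h2 h3
      exact (hasDerivAt_mpE3 E0 (E1 ^ 2 / E0) E1 hE0 h1 h2 h3).deriv
    refine Filter.Tendsto.congr' ?_ (hψ.mono_left nhdsWithin_le_nhds)
    exact (hEv.mono fun E1 h => h.symm).filter_mono nhdsWithin_le_nhds
end

section
/- Assume the MP₂ closure satisfies: (a) sgn(∂E_3/∂E_0) = −sgn(E_1); (b) ∂E_3/∂E_1 > 0 at E_1 = 0; (c) ∂²E_3/∂E_2² = 0; and (d) sgn(𝓔_3 − 𝓔_1³ − (𝓔_2 − 𝓔_1²)∂E_3/∂E_2) = sgn(E_1). Then for every state in the realizable domain, the characteristic polynomial p(λ) = λ³ − (∂E_3/∂E_2)λ² − (∂E_3/∂E_1)λ − ∂E_3/∂E_0 has three distinct real roots; hence the MP₂ system is hyperbolic. -/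
open MeasureTheory intervalIntegral

/-! ### Auxiliary definitions -/

noncomputable def mpKf (v : ℝ) : ℝ :=
  mpMoment v 5 - mpMoment v 2 * mpMoment v 3 -
    mpBeta v * (mpMoment v 4 - mpMoment v 1 * mpMoment v 3)

noncomputable def mpDf (v : ℝ) : ℝ :=
  mpMoment v 4 - (mpMoment v 2) ^ 2 -
    mpBeta v * (mpMoment v 3 - mpMoment v 1 * mpMoment v 2)

noncomputable def mpHf (E1 x : ℝ) : ℝ := mpKf (E1 / x) / mpDf (E1 / x)

noncomputable def mpGf (E1 x : ℝ) : ℝ :=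
  x * mpMoment (E1 / x) 3 - x * mpMoment (E1 / x) 2 * mpHf E1 x

lemma mpE3_eq (E1 x z : ℝ) : mpE3 x E1 z = mpGf E1 x + z * mpHf E1 x := by
  unfold mpE3 mpF2 mpGf mpHf mpKf mpDf
  rw [div_mul_eq_mul_div, mul_div_assoc]
  ring

/-! ### Integral computations -/

lemma mp_aux_integral (α : ℝ) (h1 : α^2 < 1) (h0 : α ≠ 0) :
    ∫ μ in (-1:ℝ)..1, μ / (1 + α*μ)^4 = -8*α/(3*(1-α^2)^3) := by
  have habs : |α| < 1 := (sq_lt_one_iff_abs_lt_one α).1 h1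
  have hal := abs_lt.1 habs
  have hpos : ∀ μ : ℝ, μ ∈ Set.uIcc (-1:ℝ) 1 → 0 < 1 + α*μ := by
    intro μ hμ
    rw [Set.uIcc_of_le (by norm_num)] at hμ
    have h2 : |α * μ| < 1 := by
      rw [abs_mul]
      calc |α| * |μ| ≤ |α| * 1 := by
            refine mul_le_mul_of_nonneg_left ?_ (abs_nonneg _)
            rw [abs_le]; exact ⟨hμ.1, hμ.2⟩
        _ < 1 := by simpa using habs
    nlinarith [abs_lt.1 h2]
  set F : ℝ → ℝ := fun μ => (1/α^2) * (-(1/2) * ((1+α*μ)^2)⁻¹ + (1/3) * ((1+α*μ)^3)⁻¹) with hF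
  have hderiv : ∀ μ ∈ Set.uIcc (-1:ℝ) 1, HasDerivAt F (μ / (1+α*μ)^4) μ := by
    intro μ hμ
    have hne : 1 + α*μ ≠ 0 := (hpos μ hμ).ne'
    have h₁ : HasDerivAt (fun μ : ℝ => 1 + α*μ) α μ := by
      simpa using ((hasDerivAt_id μ).const_mul α).const_add 1
    have h₂ := ((h₁.pow 2).inv (pow_ne_zero 2 hne)).const_mul (-(1/2:ℝ))
    have h₃ := ((h₁.pow 3).inv (pow_ne_zero 3 hne)).const_mul (1/3:ℝ)
    have h4 := (h₂.add h₃).const_mul (1/α^2)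
    refine h4.congr_deriv ?_
    simp only [Pi.pow_apply]
    field_simp
    ring
  have hint : IntervalIntegrable (fun μ => μ / (1+α*μ)^4) MeasureTheory.volume (-1) 1 := by
    apply ContinuousOn.intervalIntegrable
    apply ContinuousOn.div continuousOn_id
    · exact (((continuous_const.add (continuous_const.mul continuous_id)).pow 4)).continuousOn
    · intro μ hμ; exact pow_ne_zero 4 (hpos μ hμ).ne'
  rw [intervalIntegral.integral_eq_sub_of_hasDerivAt hderiv hint]
  have hne1 : (1:ℝ) + α ≠ 0 := by nlinarith
  have hne2 : (1:ℝ) - α ≠ 0 := by nlinarith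
  simp only [hF]
  have e1 : (1:ℝ) + α*1 = 1+α := by ring
  have e2 : (1:ℝ) + α*(-1) = 1-α := by ring
  rw [e1, e2]
  have hne3 : (1:ℝ) - α^2 ≠ 0 := by nlinarith
  field_simp [hne3]
  ring

lemma mpMoment_zero_odd (k : ℕ) (hk : Odd k) : mpMoment 0 k = 0 := by
  have hw : ∀ μ : ℝ, mpWeight 0 μ = 1/2 := by
    intro μ
    simp [mpWeight, mpAlpha_zero, mpEps]
    norm_num
  simp only [mpMoment, hw]
  have h : ∀ μ : ℝ, μ^k * (1/2 : ℝ) = (1/2) * μ^k := fun μ => by ring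
  simp only [h]
  rw [intervalIntegral.integral_const_mul, integral_pow]
  rcases hk with ⟨m, hm⟩
  subst hm
  have h2 : ((-1:ℝ))^(2*m+1+1) = 1 := by
    rw [pow_succ, pow_succ]
    simp [pow_mul]
  rw [h2]
  simp

lemma mpAlpha_prop (u : ℝ) (hu : u^2 < 1) (h : u ≠ 0) :
    (mpAlpha u)^2 < 1 ∧ mpAlpha u ≠ 0 := by
  have hs4 : (0:ℝ) < 4 - 3*u^2 := by nlinarith
  have hs2 : (Real.sqrt (4 - 3*u^2))^2 = 4 - 3*u^2 := Real.sq_sqrt hs4.le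
  have hs1 : 1 < Real.sqrt (4 - 3*u^2) := by
    nlinarith [Real.sqrt_nonneg (4-3*u^2)]
  have hα : mpAlpha u = -(3*u)/(2 + Real.sqrt (4 - 3*u^2)) := rfl
  constructor
  · rw [hα, div_pow, div_lt_one (by positivity)]
    nlinarith
  · rw [hα]
    intro hcon
    rcases div_eq_zero_iff.1 hcon with h1 | h1
    · exact h (by linarith [neg_eq_zero.1 h1])
    · linarith

lemma mpMoment_one (u : ℝ) (hu : u^2 < 1) : mpMoment u 1 = u := by
  rcases eq_or_ne u 0 with h|h
  · subst h; exact mpMoment_zero_odd 1 odd_one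
  obtain ⟨hα1, hα0⟩ := mpAlpha_prop u hu h
  have key := mp_aux_integral (mpAlpha u) hα1 hα0
  have step1 : mpMoment u 1 = mpEps (mpAlpha u) * ∫ μ in (-1:ℝ)..1, μ/(1+mpAlpha u*μ)^4 := by
    rw [mpMoment, ← intervalIntegral.integral_const_mul]
    apply intervalIntegral.integral_congr
    intro μ _
    simp only [mpWeight, pow_one]
    ring
  have step2 : mpEps (mpAlpha u) * (-8*(mpAlpha u)/(3*(1-(mpAlpha u)^2)^3))
      = -4*mpAlpha u/(3+(mpAlpha u)^2) := by
    have h1 : (1:ℝ) - (mpAlpha u)^2 ≠ 0 := by nlinarith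
    have h2 : (3:ℝ) + (mpAlpha u)^2 ≠ 0 := by positivity
    rw [mpEps]; field_simp; ring
  rw [step1, key, step2]
  have hs4 : (0:ℝ) < 4 - 3*u^2 := by nlinarith
  have hs2 : (Real.sqrt (4 - 3*u^2))^2 = 4 - 3*u^2 := Real.sq_sqrt hs4.le
  have hs1 : 1 < Real.sqrt (4 - 3*u^2) := by
    nlinarith [Real.sqrt_nonneg (4-3*u^2)]
  have hα : mpAlpha u = -(3*u)/(2 + Real.sqrt (4 - 3*u^2)) := rfl
  rw [hα]
  set s := Real.sqrt (4 - 3*u^2)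
  have h2s : (0:ℝ) < 2 + s := by linarith
  have hden : (3:ℝ) + (-(3*u)/(2+s))^2 ≠ 0 := by positivity
  field_simp
  linear_combination -hs2

lemma mpE3_zero (x z : ℝ) : mpE3 x 0 z = 0 := by
  rw [mpE3]
  rw [zero_div, mpMoment_zero_odd 3 ⟨1, by norm_num⟩, mpMoment_zero_odd 5 ⟨2, by norm_num⟩,
    mpMoment_zero_odd 1 odd_one, mpBeta_zero]
  ring

/-! ### Cubic with sign changes -/

lemma cubic_roots_pos (a b c t : ℝ) (ht : 0 < t) (h0 : 0 < -c)
    (hpt : t^3 - a*t^2 - b*t - c < 0) :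
    ∃ l1 l2 l3 : ℝ, l1 < l2 ∧ l2 < l3 ∧
      ∀ x : ℝ, x^3 - a*x^2 - b*x - c = (x - l1)*(x - l2)*(x - l3) := by
  set p : ℝ → ℝ := fun x => x^3 - a*x^2 - b*x - c with hp
  have hcont : Continuous p := by fun_prop
  set M : ℝ := 1 + |a| + |b| + |c| + t with hM
  have hM1 : 1 ≤ M := by
    have := abs_nonneg a; have := abs_nonneg b; have := abs_nonneg c; linarith
  have hMt : t < M := by
    have := abs_nonneg a; have := abs_nonneg b; have := abs_nonneg c; linarith
  have hpM : 0 < p M := by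
    have h1 := le_abs_self a
    have h2 := le_abs_self b
    have h3 := le_abs_self c
    have hM2 : M^2 ≥ M := by nlinarith
    simp only [hp]
    nlinarith [abs_nonneg a, abs_nonneg b, abs_nonneg c]
  have hpnM : p (-M) < 0 := by
    have h1 := neg_abs_le a
    have h2 := neg_abs_le b
    have h3 := neg_abs_le c
    have hM2 : M^2 ≥ M := by nlinarith
    simp only [hp]
    nlinarith [abs_nonneg a, abs_nonneg b, abs_nonneg c, le_abs_self b]
  have hp0 : 0 < p 0 := by simpa [hp] using h0
  have hpt' : p t < 0 := hpt
  obtain ⟨l1, hl1mem, hl1⟩ : ∃ l1 ∈ Set.Ioo (-M) (0:ℝ), p l1 = 0 := by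
    have h := intermediate_value_Ioo (by linarith : (-M:ℝ) ≤ 0) hcont.continuousOn
    obtain ⟨x, hx, hfx⟩ := h (Set.mem_Ioo.2 ⟨hpnM, hp0⟩)
    exact ⟨x, hx, hfx⟩
  obtain ⟨l2, hl2mem, hl2⟩ : ∃ l2 ∈ Set.Ioo (0:ℝ) t, p l2 = 0 := by
    have h := intermediate_value_Ioo' (le_of_lt ht) hcont.continuousOn
    obtain ⟨x, hx, hfx⟩ := h (Set.mem_Ioo.2 ⟨hpt', hp0⟩)
    exact ⟨x, hx, hfx⟩
  obtain ⟨l3, hl3mem, hl3⟩ : ∃ l3 ∈ Set.Ioo t M, p l3 = 0 := by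
    have h := intermediate_value_Ioo (le_of_lt hMt) hcont.continuousOn
    obtain ⟨x, hx, hfx⟩ := h (Set.mem_Ioo.2 ⟨hpt', hpM⟩)
    exact ⟨x, hx, hfx⟩
  have h12 : l1 < l2 := lt_trans hl1mem.2 hl2mem.1
  have h23 : l2 < l3 := lt_trans hl2mem.2 hl3mem.1
  refine ⟨l1, l2, l3, h12, h23, ?_⟩
  simp only [hp] at hl1 hl2 hl3
  have h12' : l1 - l2 ≠ 0 := sub_ne_zero.2 (ne_of_lt h12)
  have h23' : l2 - l3 ≠ 0 := sub_ne_zero.2 (ne_of_lt h23)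
  have h13' : l1 - l3 ≠ 0 := sub_ne_zero.2 (ne_of_lt (lt_trans h12 h23))
  have e12 : l1^2 + l1*l2 + l2^2 - a*(l1+l2) - b = 0 := by
    have h : (l1 - l2) * (l1^2 + l1*l2 + l2^2 - a*(l1+l2) - b) = 0 := by
      linear_combination hl1 - hl2
    exact (mul_eq_zero.1 h).resolve_left h12'
  have e23 : l2^2 + l2*l3 + l3^2 - a*(l2+l3) - b = 0 := by
    have h : (l2 - l3) * (l2^2 + l2*l3 + l3^2 - a*(l2+l3) - b) = 0 := by
      linear_combination hl2 - hl3
    exact (mul_eq_zero.1 h).resolve_left h23'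
  have hA : a = l1 + l2 + l3 := by
    have h : (l1 - l3) * (l1 + l2 + l3 - a) = 0 := by linear_combination e12 - e23
    have h' := (mul_eq_zero.1 h).resolve_left h13'
    linarith [h']
  have hB : b = -(l1*l2 + l1*l3 + l2*l3) := by
    have h := e12
    rw [hA] at h
    nlinarith [h]
  have hC : c = l1*l2*l3 := by linear_combination -hl1 - l1^2*hA - l1*hB
  intro x
  linear_combination (-(x^2))*hA + (-x)*hB + (-1)*hC

/-! ### Sign helpers -/

lemma mp_pos_of_sign {x : ℝ} (h : Real.sign x = 1) : 0 < x := by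
  rcases lt_trichotomy x 0 with h'|h'|h'
  · rw [Real.sign_of_neg h'] at h; norm_num at h
  · rw [h', Real.sign_zero] at h; norm_num at h
  · exact h'

lemma mp_neg_of_sign {x : ℝ} (h : Real.sign x = -1) : x < 0 := by
  rcases lt_trichotomy x 0 with h'|h'|h'
  · exact h'
  · rw [h', Real.sign_zero] at h; norm_num at h
  · rw [Real.sign_of_pos h'] at h; norm_num at h

/-- Hyperbolicity of the MP₂ system: assuming the closure satisfies
(a) `sgn(∂E₃/∂E₀) = -sgn(E₁)`, (b) `∂E₃/∂E₁ > 0` at `E₁ = 0`,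
(c) `∂²E₃/∂E₂² = 0`, and (d) `sgn(𝓔₃ - 𝓔₁³ - (𝓔₂ - 𝓔₁²)∂E₃/∂E₂) = sgn(E₁)`
on the realizable domain, the characteristic polynomial
`p(λ) = λ³ - (∂E₃/∂E₂)λ² - (∂E₃/∂E₁)λ - ∂E₃/∂E₀` has three distinct real
roots at every realizable state. -/
theorem MP2_hyperbolic
    (ha : ∀ E0 E1 E2 : ℝ, 0 < E0 → E2 < E0 → E1 ^ 2 < E0 * E2 →
      Real.sign (deriv (fun x => mpE3 x E1 E2) E0) = -Real.sign E1)
    (hb : ∀ E0 E2 : ℝ, 0 < E0 → E2 < E0 → 0 < E2 →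
      0 < deriv (fun y => mpE3 E0 y E2) 0)
    (hc : ∀ E0 E1 E2 : ℝ, 0 < E0 → E2 < E0 → E1 ^ 2 < E0 * E2 →
      deriv (deriv (fun z => mpE3 E0 E1 z)) E2 = 0)
    (hd : ∀ E0 E1 E2 : ℝ, 0 < E0 → E2 < E0 → E1 ^ 2 < E0 * E2 →
      Real.sign (mpMoment (E1 / E0) 3 - (mpMoment (E1 / E0) 1) ^ 3 -
          (mpMoment (E1 / E0) 2 - (mpMoment (E1 / E0) 1) ^ 2) *
            deriv (fun z => mpE3 E0 E1 z) E2)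
        = Real.sign E1) :
    ∀ E0 E1 E2 : ℝ, 0 < E0 → E2 < E0 → E1 ^ 2 < E0 * E2 →
      ∃ l1 l2 l3 : ℝ, l1 < l2 ∧ l2 < l3 ∧
        ∀ x : ℝ,
          x ^ 3 - (deriv (fun z => mpE3 E0 E1 z) E2) * x ^ 2 -
              (deriv (fun y => mpE3 E0 y E2) E1) * x -
              (deriv (fun x' => mpE3 x' E1 E2) E0)
            = (x - l1) * (x - l2) * (x - l3) := by
  intro E0 E1 E2 hE0 hE2lt hreal
  -- the z-derivative is explicit since mpE3 is affine in z
  have hAeq : deriv (fun z => mpE3 E0 E1 z) E2 = mpHf E1 E0 := by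
    have h : (fun z => mpE3 E0 E1 z) = fun z => mpGf E1 E0 + z * mpHf E1 E0 :=
      funext fun z => mpE3_eq E1 E0 z
    rw [h]
    have hd' : HasDerivAt (fun z : ℝ => mpGf E1 E0 + z * mpHf E1 E0)
        (1 * mpHf E1 E0) E2 := ((hasDerivAt_id E2).mul_const (mpHf E1 E0)).const_add _
    rw [hd'.deriv]; ring
  by_cases hE1 : E1 = 0
  · -- E1 = 0 : explicit roots ±√b, 0
    subst hE1
    have hE2pos : 0 < E2 := by nlinarith
    have d1 : deriv (fun z => mpE3 E0 0 z) E2 = 0 := by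
      have h : (fun z => mpE3 E0 0 z) = fun _ => (0:ℝ) := funext fun z => mpE3_zero E0 z
      rw [h, deriv_const]
    have d2 : deriv (fun x => mpE3 x 0 E2) E0 = 0 := by
      have h : (fun x => mpE3 x 0 E2) = fun _ => (0:ℝ) := funext fun x => mpE3_zero x E2
      rw [h, deriv_const]
    have hbpos := hb E0 E2 hE0 hE2lt hE2pos
    set b := deriv (fun y => mpE3 E0 y E2) 0 with hbdef
    have hsq : Real.sqrt b ^ 2 = b := Real.sq_sqrt hbpos.le
    have hsqpos : 0 < Real.sqrt b := Real.sqrt_pos.2 hbpos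
    refine ⟨-Real.sqrt b, 0, Real.sqrt b, by linarith, hsqpos, ?_⟩
    intro x
    rw [d1, d2]
    linear_combination x * hsq
  · -- E1 ≠ 0
    have hE1sq : 0 < E1^2 := by positivity
    have hE2pos : 0 < E2 := by nlinarith
    have hu2 : (E1/E0)^2 < 1 := by
      rw [div_pow, div_lt_one (by positivity)]
      nlinarith
    have hm1 : mpMoment (E1/E0) 1 = E1/E0 := mpMoment_one _ hu2
    set a := mpHf E1 E0 with hadef
    -- differentiability in x at two values of z
    have hdiff_at : ∀ z : ℝ, z < E0 → E1^2 < E0*z →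
        DifferentiableAt ℝ (fun x => mpE3 x E1 z) E0 := by
      intro z h1 h2
      by_contra hcon
      have h := ha E0 E1 z hE0 h1 h2
      rw [deriv_zero_of_not_differentiableAt hcon, Real.sign_zero] at h
      rcases lt_trichotomy E1 0 with h'|h'|h'
      · rw [Real.sign_of_neg h'] at h; norm_num at h
      · exact hE1 h'
      · rw [Real.sign_of_pos h'] at h; norm_num at h
    have hdiff : DifferentiableAt ℝ (fun x => mpE3 x E1 E2) E0 := hdiff_at E2 hE2lt hreal
    set E2' := (E1^2/E0 + E2)/2 with hE2'def
    have hE2'lt : E2' < E2 := by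
      rw [hE2'def]
      have h : E1^2/E0 < E2 := (div_lt_iff₀ hE0).2 (by nlinarith)
      linarith
    have hE2'real : E1^2 < E0 * E2' := by
      have h : E0 * E2' = (E1^2 + E0*E2)/2 := by rw [hE2'def]; field_simp
      rw [h]; nlinarith
    have hdiff' : DifferentiableAt ℝ (fun x => mpE3 x E1 E2') E0 :=
      hdiff_at E2' (by linarith) hE2'real
    have hHdiff : DifferentiableAt ℝ (fun x => mpHf E1 x) E0 := by
      have h1 : DifferentiableAt ℝ (fun x => mpE3 x E1 E2 - mpE3 x E1 E2') E0 :=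
        hdiff.sub hdiff'
      have h2 : (fun x => mpE3 x E1 E2 - mpE3 x E1 E2') = fun x => (E2 - E2') * mpHf E1 x := by
        funext x; rw [mpE3_eq, mpE3_eq]; ring
      rw [h2] at h1
      have h3 := h1.const_mul (E2 - E2')⁻¹
      have hne : E2 - E2' ≠ 0 := by linarith
      have h4 : (fun x => (E2-E2')⁻¹ * ((E2 - E2') * mpHf E1 x)) = fun x => mpHf E1 x := by
        funext x; field_simp
      rwa [h4] at h3
    have hGdiff : DifferentiableAt ℝ (fun x => mpGf E1 x) E0 := by
      have h1 : (fun x => mpGf E1 x) = fun x => mpE3 x E1 E2 - E2 * mpHf E1 x := by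
        funext x; rw [mpE3_eq]; ring
      rw [h1]; exact hdiff.sub (hHdiff.const_mul E2)
    set G' := deriv (fun x => mpGf E1 x) E0 with hG'def
    set H' := deriv (fun x => mpHf E1 x) E0 with hH'def
    set c := deriv (fun x => mpE3 x E1 E2) E0 with hcdef
    have hc_eq : c = G' + E2 * H' := by
      have h : (fun x => mpE3 x E1 E2) = fun x => mpGf E1 x + E2 * mpHf E1 x :=
        funext fun x => by rw [mpE3_eq]
      rw [hcdef, h, deriv_fun_add hGdiff (hHdiff.const_mul E2), deriv_const_mul E2 hHdiff]
    -- the y-derivative via rescaling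
    set b := deriv (fun y => mpE3 E0 y E2) E1 with hbdef
    have hσE1 : E1 * E0 / E1 = E0 := by field_simp
    have hψ : (fun y => mpE3 E0 y E2) =ᶠ[nhds E1]
        (fun y => (y/E1) * mpGf E1 (E1*E0/y) + E2 * mpHf E1 (E1*E0/y)) := by
      filter_upwards [eventually_ne_nhds hE1] with y hy
      rw [mpE3_eq]
      have hx : E1 * E0 / y ≠ 0 := div_ne_zero (mul_ne_zero hE1 hE0.ne') hy
      have harg : E1 / (E1*E0/y) = y / E0 := by
        field_simp
      have hcoef : y/E1 * (E1*E0/y) = E0 := by field_simp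
      simp only [mpGf, mpHf, harg]
      linear_combination
        (-(mpMoment (y/E0) 3 - mpMoment (y/E0) 2 * (mpKf (y/E0) / mpDf (y/E0)))) * hcoef
    have hσ : HasDerivAt (fun y : ℝ => E1*E0/y) (-(E1*E0)/E1^2) E1 := by
      have h := (hasDerivAt_const E1 (E1*E0)).div (hasDerivAt_id E1) hE1
      simp at h; exact h
    have hG'' : HasDerivAt (fun x => mpGf E1 x) G' (E1*E0/E1) := by
      rw [hσE1]; exact hGdiff.hasDerivAt
    have hH'' : HasDerivAt (fun x => mpHf E1 x) H' (E1*E0/E1) := by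
      rw [hσE1]; exact hHdiff.hasDerivAt
    have hGσ : HasDerivAt (fun y => mpGf E1 (E1*E0/y)) (G' * (-(E1*E0)/E1^2)) E1 := by
      have h := hG''.comp E1 hσ
      exact h
    have hHσ : HasDerivAt (fun y => mpHf E1 (E1*E0/y)) (H' * (-(E1*E0)/E1^2)) E1 := by
      have h := hH''.comp E1 hσ
      exact h
    have hfrac : HasDerivAt (fun y : ℝ => y/E1) (1/E1) E1 := by
      simpa using (hasDerivAt_id E1).div_const E1
    have htot : HasDerivAt
        (fun y => (y/E1) * mpGf E1 (E1*E0/y) + E2 * mpHf E1 (E1*E0/y))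
        ((1/E1) * mpGf E1 (E1*E0/E1) + (E1/E1) * (G' * (-(E1*E0)/E1^2))
          + E2 * (H' * (-(E1*E0)/E1^2))) E1 :=
      (hfrac.mul hGσ).add (hHσ.const_mul E2)
    have hb_eq : E1 * b = mpGf E1 E0 - E0 * c := by
      rw [hbdef, hψ.deriv_eq, htot.deriv, hc_eq, hσE1]
      field_simp
      ring
    -- the key relation b * (E1/E0) = 𝓔₃ - 𝓔₂ a - c
    have hG0 : mpGf E1 E0 = E0 * mpMoment (E1/E0) 3 - E0 * mpMoment (E1/E0) 2 * a := rfl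
    have hbu : b * E1 = E0 * (mpMoment (E1/E0) 3 - mpMoment (E1/E0) 2 * a - c) := by
      rw [mul_comm, hb_eq, hG0]; ring
    -- sign information
    have hsgn_c := ha E0 E1 E2 hE0 hE2lt hreal
    have hsgn_X := hd E0 E1 E2 hE0 hE2lt hreal
    rw [hAeq] at hsgn_X
    rw [← hcdef] at hsgn_c
    rw [hm1] at hsgn_X
    set X := mpMoment (E1/E0) 3 - (E1/E0)^3 - (mpMoment (E1/E0) 2 - (E1/E0)^2) * a with hXdef
    -- p(u) = -X
    have hpu : (E1/E0)^3 - a*(E1/E0)^2 - b*(E1/E0) - c = -X := by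
      have h1 : b * (E1/E0) = mpMoment (E1/E0) 3 - mpMoment (E1/E0) 2 * a - c := by
        rw [div_eq_mul_inv, ← mul_assoc, hbu]
        field_simp
      rw [hXdef]
      linear_combination -h1
    rcases lt_trichotomy E1 0 with hneg|hzero|hpos
    · -- E1 < 0
      have hsE1 : Real.sign E1 = -1 := Real.sign_of_neg hneg
      rw [hsE1] at hsgn_c hsgn_X
      have hcpos : 0 < c := mp_pos_of_sign (by rw [hsgn_c]; norm_num)
      have hXneg : X < 0 := mp_neg_of_sign hsgn_X
      have hu_neg : E1/E0 < 0 := div_neg_of_neg_of_pos hneg hE0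
      obtain ⟨m1, m2, m3, hm12, hm23, hfac⟩ :=
        cubic_roots_pos (-a) b (-c) (-(E1/E0)) (by linarith) (by simpa using hcpos)
          (by
            have h2 : (-(E1/E0))^3 - (-a)*(-(E1/E0))^2 - b*(-(E1/E0)) - (-c) = X := by
              linear_combination -hpu
            rw [h2]; exact hXneg)
      refine ⟨-m3, -m2, -m1, by linarith, by linarith, ?_⟩
      intro x
      rw [hAeq]
      have h := hfac (-x)
      linear_combination -h
    · exact absurd hzero hE1
    · -- E1 > 0
      have hsE1 : Real.sign E1 = 1 := Real.sign_of_pos hpos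
      rw [hsE1] at hsgn_c hsgn_X
      have hcneg : c < 0 := mp_neg_of_sign (by rw [hsgn_c])
      have hXpos : 0 < X := mp_pos_of_sign hsgn_X
      have hu_pos : 0 < E1/E0 := div_pos hpos hE0
      obtain ⟨l1, l2, l3, h12, h23, hfac⟩ :=
        cubic_roots_pos a b c (E1/E0) hu_pos (by linarith) (by rw [hpu]; linarith)
      refine ⟨l1, l2, l3, h12, h23, ?_⟩
      intro x
      rw [hAeq]
      exact hfac x
end

section
/- Suppose two states U^L, U^R with E_0^L, E_0^R > 0 satisfy the Rankine–Hugoniot conditions E_1^R − E_1^L = s(E_0^R − E_0^L), E_2^R − E_2^L = s(E_1^R − E_1^L) with E_0^R ≠ E_0^L and s > E_1^R/E_0^R. Then with u = E_1/E_0 and p = E_2 − E_1²/E_0: (E_0^R − E_0^L)(u^R − u^L) > 0 and (E_0^R − E_0^L)(p^R − p^L) ≥ 0, with the latter strict unless E_0^R E_1^L = E_0^L E_1^R. -/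
/-- Shock relations for the MP₂ system: if two states satisfy the
Rankine–Hugoniot conditions with shock speed `s > E₁ᴿ/E₀ᴿ` and `E₀ᴿ ≠ E₀ᴸ`,
then with `u = E₁/E₀` and `p = E₂ - E₁²/E₀` one has
`(E₀ᴿ - E₀ᴸ)(uᴿ - uᴸ) > 0` and `(E₀ᴿ - E₀ᴸ)(pᴿ - pᴸ) ≥ 0`, the latter being
strict unless `E₀ᴿE₁ᴸ = E₀ᴸE₁ᴿ`. -/
theorem MP2_shock_relations (E0L E0R E1L E1R E2L E2R s : ℝ)
    (h0L : 0 < E0L) (h0R : 0 < E0R)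
    (hRH1 : E1R - E1L = s * (E0R - E0L))
    (hRH2 : E2R - E2L = s * (E1R - E1L))
    (hne : E0R ≠ E0L) (hs : E1R / E0R < s) :
    0 < (E0R - E0L) * (E1R / E0R - E1L / E0L) ∧
    0 ≤ (E0R - E0L) * ((E2R - E1R ^ 2 / E0R) - (E2L - E1L ^ 2 / E0L)) ∧
    (E0R * E1L ≠ E0L * E1R →
      0 < (E0R - E0L) * ((E2R - E1R ^ 2 / E0R) - (E2L - E1L ^ 2 / E0L))) := by
  have h0L' := h0L.ne'
  have h0R' := h0R.ne'
  have hD : E0R - E0L ≠ 0 := sub_ne_zero.mpr hne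
  -- s*E0R - E1R > 0
  have hsR : 0 < s * E0R - E1R := by
    have := (div_lt_iff₀ h0R).mp hs
    linarith
  -- first identity: (E0R-E0L)*(uR-uL) = (E0R-E0L)^2 * (s*E0R-E1R) / (E0L*E0R)
  have h1 : (E0R - E0L) * (E1R / E0R - E1L / E0L)
      = (E0R - E0L) ^ 2 * (s * E0R - E1R) / (E0L * E0R) := by
    field_simp
    linear_combination (E0R) * hRH1
  -- second identity: (E0R-E0L)*(pR-pL) = (E0R*E1L - E0L*E1R)^2/(E0L*E0R)
  have h2 : (E0R - E0L) * ((E2R - E1R ^ 2 / E0R) - (E2L - E1L ^ 2 / E0L))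
      = (E0R * E1L - E0L * E1R) ^ 2 / (E0L * E0R) := by
    field_simp
    linear_combination (E0L * E0R * (E0R - E0L)) * hRH2 - (E0L * E0R * (E1R - E1L)) * hRH1
  refine ⟨?_, ?_, ?_⟩
  · rw [h1]
    positivity
  · rw [h2]
    positivity
  · intro hQ
    rw [h2]
    have : E0R * E1L - E0L * E1R ≠ 0 := sub_ne_zero.mpr hQ
    positivity
end
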